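/- Douglas' Lemma: for bounded operators A, B on a Hilbert space H, the following are equivalent: (1) Ran A ⊆ Ran B; (2) AA* ≤ λ² BB* for some λ ≥ 0; (3) there exists a bounded operator C on H with A = BC. -/

import Mathlib

open ContinuousLinearMap Filter Topology

section Helpers

variable {H : Type*} [NormedAddCommGroup H] [InnerProductSpace ℂ H] [CompleteSpace H]

local notation "⟪" x ", " y "⟫" => @inner ℂ _ _ x y

private lemma re_inner_mul_adjoint (T : H →L[ℂ] H) (x : H) :
    RCLike.re ⟪(T * adjoint T) x, x⟫ = ‖adjoint T x‖ ^ 2 := by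
  have h : (T * adjoint T) x = T (adjoint T x) := rfl
  rw [h, ← adjoint_inner_right, inner_self_eq_norm_sq_to_K]
  norm_cast

private lemma norm_adjoint_le {A B : H →L[ℂ] H} {l : ℝ}
    (hp : ((l ^ 2) • (B * adjoint B) - A * adjoint A).IsPositive) (hl : 0 ≤ l) (x : H) :
    ‖adjoint A x‖ ≤ l * ‖adjoint B x‖ := by
  have h := hp.2 x
  rw [reApplyInnerSelf_apply] at h
  have e1 : ((l ^ 2) • (B * adjoint B) - A * adjoint A) x
      = (l ^ 2 : ℝ) • ((B * adjoint B) x) - (A * adjoint A) x := rfl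
  rw [e1, inner_sub_left] at h
  have e2 : ⟪(l ^ 2 : ℝ) • ((B * adjoint B) x), x⟫
      = (l ^ 2 : ℝ) • ⟪(B * adjoint B) x, x⟫ := by
    rw [← inner_smul_real_left]
    norm_cast
  rw [e2, map_sub] at h
  have e3 : RCLike.re ((l ^ 2 : ℝ) • ⟪(B * adjoint B) x, x⟫)
      = l ^ 2 * RCLike.re ⟪(B * adjoint B) x, x⟫ := RCLike.smul_re _ _
  rw [e3, re_inner_mul_adjoint, re_inner_mul_adjoint] at h
  nlinarith [norm_nonneg (adjoint A x), norm_nonneg (adjoint B x),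
    mul_nonneg hl (norm_nonneg (adjoint B x))]

private lemma range_subset_of_pos {A B : H →L[ℂ] H} {l : ℝ} (hl : 0 ≤ l)
    (hp : ((l ^ 2) • (B * adjoint B) - A * adjoint A).IsPositive) :
    Set.range A ⊆ Set.range B := by
  classical
  have key : ∀ x, ‖adjoint A x‖ ≤ l * ‖adjoint B x‖ := norm_adjoint_le hp hl
  have wd : ∀ x y : H, adjoint B x = adjoint B y → adjoint A x = adjoint A y := by
    intro x y hxy
    have h1 := key (x - y)
    rw [map_sub, map_sub, hxy, sub_self, norm_zero, mul_zero] at h1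
    have h2 : adjoint A x - adjoint A y = 0 := norm_le_zero_iff.mp h1
    exact sub_eq_zero.mp h2
  rintro _ ⟨u, rfl⟩
  set p : Submodule ℂ H := LinearMap.range (adjoint B : H →ₗ[ℂ] H) with hp'
  have rep : ∀ v : p, ∃ x : H, adjoint B x = (v : H) := fun v => LinearMap.mem_range.mp v.2
  let r : p → H := fun v => (rep v).choose
  have hr : ∀ v : p, adjoint B (r v) = (v : H) := fun v => (rep v).choose_spec
  let f₀ : p →ₗ[ℂ] ℂ :=
    { toFun := fun v => ⟪u, adjoint A (r v)⟫
      map_add' := by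
        intro v w
        have h1 : adjoint B (r (v + w)) = adjoint B (r v + r w) := by
          rw [map_add, hr, hr, hr, Submodule.coe_add]
        rw [wd _ _ h1, map_add, inner_add_right]
      map_smul' := by
        intro c v
        have h1 : adjoint B (r (c • v)) = adjoint B (c • r v) := by
          rw [map_smul, hr, hr, Submodule.coe_smul]
        rw [wd _ _ h1, map_smul, inner_smul_right]
        rfl }
  have hbound : ∀ v : p, ‖f₀ v‖ ≤ (l * ‖u‖) * ‖v‖ := by
    intro v
    have h1 : ‖f₀ v‖ ≤ ‖u‖ * ‖adjoint A (r v)‖ := norm_inner_le_norm _ _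
    have h2 : ‖adjoint A (r v)‖ ≤ l * ‖adjoint B (r v)‖ := key _
    have h3 : ‖adjoint B (r v)‖ = ‖v‖ := by rw [hr]; rfl
    rw [h3] at h2
    calc ‖f₀ v‖ ≤ ‖u‖ * ‖adjoint A (r v)‖ := h1
      _ ≤ ‖u‖ * (l * ‖v‖) := by
          exact mul_le_mul_of_nonneg_left h2 (norm_nonneg u)
      _ = (l * ‖u‖) * ‖v‖ := by ring
  let f : p →L[ℂ] ℂ := f₀.mkContinuous (l * ‖u‖) hbound
  obtain ⟨g, hg, -⟩ := exists_extension_norm_eq p f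
  refine ⟨(InnerProductSpace.toDual ℂ H).symm g, ?_⟩
  refine ext_inner_right ℂ fun x => ?_
  rw [← adjoint_inner_right, InnerProductSpace.toDual_symm_apply]
  have hmem : adjoint B x ∈ p := LinearMap.mem_range_self _ x
  have h1 : g (adjoint B x) = f ⟨adjoint B x, hmem⟩ := hg ⟨adjoint B x, hmem⟩
  rw [h1]
  have h2 : f ⟨adjoint B x, hmem⟩ = ⟪u, adjoint A (r ⟨adjoint B x, hmem⟩)⟫ := rfl
  rw [h2, wd _ x (hr ⟨adjoint B x, hmem⟩), adjoint_inner_right]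

private lemma exists_factor {A B : H →L[ℂ] H} (h : Set.range A ⊆ Set.range B) :
    ∃ C : H →L[ℂ] H, A = B * C := by
  classical
  set K : Submodule ℂ H := (LinearMap.ker (B : H →ₗ[ℂ] H))ᗮ with hK
  haveI : CompleteSpace K := (Submodule.isClosed_orthogonal _).completeSpace_coe
  haveI : CompleteSpace (LinearMap.ker (B : H →ₗ[ℂ] H)) := (isClosed_ker B).completeSpace_coe
  have hKbot : Kᗮ = LinearMap.ker (B : H →ₗ[ℂ] H) := Submodule.orthogonal_orthogonal _
  let P : H → H := fun w => (K.orthogonalProjectionOnto w : H)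
  have hP0 : ∀ w ∈ LinearMap.ker (B : H →ₗ[ℂ] H), P w = 0 := by
    intro w hw
    have hw' : w ∈ Kᗮ := hKbot ▸ hw
    have := Submodule.orthogonalProjectionOnto_apply_of_mem_orthogonal hw'
    simp only [P, this, ZeroMemClass.coe_zero]
  have hBP : ∀ w, B (P w) = B w := by
    intro w
    have hmem : w - P w ∈ Kᗮ := Submodule.sub_starProjection_mem_orthogonal (K := K) w
    have hmem' : w - P w ∈ LinearMap.ker (B : H →ₗ[ℂ] H) := hKbot ▸ hmem
    have h0 : B w - B (P w) = 0 := by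
      rw [← map_sub]; exact LinearMap.mem_ker.mp hmem'
    linear_combination (norm := abel) -h0
  have hPeq : ∀ w w', B w = B w' → P w = P w' := by
    intro w w' hww
    have hker : w - w' ∈ LinearMap.ker (B : H →ₗ[ℂ] H) := by
      rw [LinearMap.mem_ker, coe_coe, map_sub, hww, sub_self]
    have h0 : P (w - w') = 0 := hP0 _ hker
    have h1 : P w - P w' = 0 := by
      simpa only [P, map_sub, Submodule.coe_sub] using h0
    exact sub_eq_zero.mp h1
  have hx : ∀ x : H, A x ∈ Set.range B := fun x => h ⟨x, rfl⟩
  let rep : H → H := fun x => (hx x).choose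
  have hrep : ∀ x, B (rep x) = A x := fun x => (hx x).choose_spec
  let f : H → H := fun x => P (rep x)
  have hBf : ∀ x, B (f x) = A x := fun x => (hBP (rep x)).trans (hrep x)
  have hfK : ∀ x, f x ∈ K := fun x => (K.orthogonalProjectionOnto (rep x)).2
  let fL : H →ₗ[ℂ] H :=
    { toFun := f
      map_add' := by
        intro x y
        have h1 : B (rep (x + y)) = B (rep x + rep y) := by
          rw [map_add, hrep, hrep, hrep, map_add]
        calc f (x + y) = P (rep x + rep y) := hPeq _ _ h1
          _ = f x + f y := by simp only [f, P, map_add, Submodule.coe_add]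
      map_smul' := by
        intro c x
        have h1 : B (rep (c • x)) = B (c • rep x) := by
          rw [map_smul, hrep, hrep, map_smul]
        calc f (c • x) = P (c • rep x) := hPeq _ _ h1
          _ = c • f x := by simp only [f, P, map_smul, Submodule.coe_smul]
        }
  have huniq : ∀ z x, z ∈ K → B z = A x → z = f x := by
    intro z x hz hBz
    have hzf : z - f x ∈ K := K.sub_mem hz (hfK x)
    have hker : z - f x ∈ LinearMap.ker (B : H →ₗ[ℂ] H) := by
      rw [LinearMap.mem_ker, coe_coe, map_sub, hBz, hBf, sub_self]
    have horth : z - f x ∈ Kᗮ := hKbot.symm ▸ hker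
    have hzero : (⟪z - f x, z - f x⟫ : ℂ) = 0 :=
      (Submodule.mem_orthogonal K (z - f x)).mp horth _ hzf
    exact sub_eq_zero.mp (inner_self_eq_zero.mp hzero)
  have hcont : Continuous fL := by
    apply fL.continuous_of_seq_closed_graph
    intro u x y hux huy
    have h1 : Tendsto (fun n => B (fL (u n))) atTop (𝓝 (B y)) :=
      (B.continuous.tendsto y).comp huy
    have h2 : (fun n => B (fL (u n))) = fun n => A (u n) := funext fun n => hBf (u n)
    have h3 : Tendsto (fun n => A (u n)) atTop (𝓝 (A x)) :=
      (A.continuous.tendsto x).comp hux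
    have hBy : B y = A x := tendsto_nhds_unique (h2 ▸ h1) h3
    have hyK : y ∈ K :=
      (Submodule.isClosed_orthogonal _).mem_of_tendsto huy
        (Filter.Eventually.of_forall fun n => hfK (u n))
    exact huniq y x hyK hBy
  refine ⟨⟨fL, hcont⟩, ?_⟩
  ext x
  exact (hBf x).symm

private lemma pos_of_factor (B C : H →L[ℂ] H) :
    ∃ l : ℝ, 0 ≤ l ∧ ((l ^ 2) • (B * adjoint B) - (B * C) * adjoint (B * C)).IsPositive := by
  refine ⟨‖C‖, norm_nonneg C, ?_, ?_⟩
  · have h1 : IsSelfAdjoint (B * adjoint B) := by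
      rw [IsSelfAdjoint, star_mul, ← star_eq_adjoint, star_star]
    have h2 : IsSelfAdjoint ((B * C) * adjoint (B * C)) := by
      rw [IsSelfAdjoint, star_mul, ← star_eq_adjoint, star_star]
    have h3 : (‖C‖ ^ 2) • (B * adjoint B) = ((‖C‖ ^ 2 : ℝ) : ℂ) • (B * adjoint B) :=
      (algebraMap_smul ℂ _ _).symm
    have h4 : IsSelfAdjoint ((‖C‖ ^ 2) • (B * adjoint B)) := by
      rw [h3, IsSelfAdjoint, star_smul, Complex.star_def, Complex.conj_ofReal, h1.star_eq]
    exact (h4.sub h2).isSymmetric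
  · intro x
    rw [reApplyInnerSelf_apply]
    have e1 : ((‖C‖ ^ 2) • (B * adjoint B) - (B * C) * adjoint (B * C)) x
        = (‖C‖ ^ 2 : ℝ) • ((B * adjoint B) x) - ((B * C) * adjoint (B * C)) x := rfl
    rw [e1, inner_sub_left]
    have e2 : ⟪(‖C‖ ^ 2 : ℝ) • ((B * adjoint B) x), x⟫
        = (‖C‖ ^ 2 : ℝ) • ⟪(B * adjoint B) x, x⟫ := by
      rw [← inner_smul_real_left]; norm_cast
    rw [e2, map_sub]
    have e3 : RCLike.re ((‖C‖ ^ 2 : ℝ) • ⟪(B * adjoint B) x, x⟫)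
        = ‖C‖ ^ 2 * RCLike.re ⟪(B * adjoint B) x, x⟫ := RCLike.smul_re _ _
    rw [e3, re_inner_mul_adjoint, re_inner_mul_adjoint]
    have e4 : adjoint (B * C) x = adjoint C (adjoint B x) := by
      rw [← star_eq_adjoint, star_mul, star_eq_adjoint, star_eq_adjoint]; rfl
    rw [e4]
    have h5 : ‖adjoint C (adjoint B x)‖ ≤ ‖C‖ * ‖adjoint B x‖ := by
      calc ‖adjoint C (adjoint B x)‖ ≤ ‖adjoint C‖ * ‖adjoint B x‖ := le_opNorm _ _
        _ = ‖C‖ * ‖adjoint B x‖ := by rw [LinearIsometryEquiv.norm_map]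
    nlinarith [norm_nonneg (adjoint B x), norm_nonneg (adjoint C (adjoint B x)),
      norm_nonneg C]

end Helpers

/-- Douglas' Lemma: for bounded operators `A`, `B` on a Hilbert space, the following are
equivalent: (1) `Ran A ⊆ Ran B`; (2) `A A* ≤ λ² B B*` for some `λ ≥ 0`;
(3) there is a bounded `C` with `A = B C`. -/
theorem douglas_lemma
    {H : Type*} [NormedAddCommGroup H] [InnerProductSpace ℂ H] [CompleteSpace H]
    (A B : H →L[ℂ] H) :
    (Set.range A ⊆ Set.range B ↔
        ∃ l : ℝ, 0 ≤ l ∧ ((l ^ 2) • (B * adjoint B) - A * adjoint A).IsPositive) ∧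
      (Set.range A ⊆ Set.range B ↔ ∃ C : H →L[ℂ] H, A = B * C) := by
  constructor
  · constructor
    · intro h
      obtain ⟨C, hC⟩ := exists_factor h
      rw [hC]
      exact pos_of_factor B C
    · rintro ⟨l, hl, hp⟩
      exact range_subset_of_pos hl hp
  · constructor
    · exact exists_factor
    · rintro ⟨C, rfl⟩ _ ⟨x, rfl⟩
      exact ⟨C x, rfl⟩
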